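/- (Generalized Wick theorem) For any two propagator matrices K and K′ and polynomials f₁,…,f_d in one variable: f₁(x₁) ⋆_K ⋯ ⋆_K f_d(x_d) = Σ_{k≥0} (ℏ^k/k!) Σ_{deg M = 2k} (k choose m₁₂,…,m_{d−1,d}) [f₁^{(α₁)}(x₁) ⋆_{K′} ⋯ ⋆_{K′} f_d^{(α_d)}(x_d)] · Π_{i<j} (K_{ij}−K′_{ij})^{m_{ij}}, with α_i = Σ_j m_{ij} and the inner sum over adjacency matrices of degree 2k. -/

import Mathlib

set_option maxHeartbeats 1000000
set_option synthInstance.maxHeartbeats 200000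


/- Statement 10 (generalized Wick theorem): for two propagator matrices `K, K′`
and one-variable polynomials `f₁,…,f_d`,
`f₁(x₁) ⋆_K ⋯ ⋆_K f_d(x_d) = Σ_{k≥0} (ℏ^k/k!) Σ_{deg M = 2k}
(k choose m₁₂,…,m_{d−1,d}) [f₁^{(α₁)}(x₁) ⋆_{K′} ⋯ ⋆_{K′} f_d^{(α_d)}(x_d)]
Π_{i<j} (K_{ij}−K′_{ij})^{m_{ij}}`, with `α_i = Σ_j m_{ij}` and the inner sum
over adjacency matrices of degree `2k` (parameterized by their
upper-triangular parts). -/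

open MvPolynomial

noncomputable section

variable {R : Type} [CommRing R] [Algebra ℚ R]

/-- the finset of pairs `i < j`. -/
def pairs (d : ℕ) : Finset (Fin d × Fin d) :=
  Finset.univ.filter (fun p : Fin d × Fin d => p.1 < p.2)

/-- the operator `Σ_{i<j} K_{ij} ∂_i ∂_j`. -/
def Lop {d : ℕ} (K : Fin d → Fin d → R) :
    Module.End R (MvPolynomial (Fin d) R) :=
  ∑ p ∈ pairs d, K p.1 p.2 • ((pderiv p.1).toLinearMap ∘ₗ (pderiv p.2).toLinearMap)

/-- the row sums `α_i = Σ_j m_{ij}`. -/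
def rowSum {d : ℕ} (M : Fin d × Fin d → ℕ) (i : Fin d) : ℕ :=
  ∑ j : Fin d, (if i < j then M (i, j) else if j < i then M (j, i) else 0)

/-- `f₁(x₁) ⋆_K ⋯ ⋆_K f_d(x_d) = exp{ℏ Σ_{i<j} K_{ij} ∂_i∂_j}(f₁(x₁)⋯f_d(x_d))`. -/
def multiStar {d : ℕ} (ℏ : R) (K : Fin d → Fin d → R)
    (f : Fin d → Polynomial R) : MvPolynomial (Fin d) R :=
  finsum fun n : ℕ =>
    (n.factorial : ℚ)⁻¹ •
      (ℏ ^ n • ((Lop K ^ n) (∏ i : Fin d, Polynomial.aeval (X i) (f i))))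


namespace WickAux

set_option linter.unusedSectionVars false

lemma pderiv_pderiv_comm {σ : Type*} {S : Type*} [CommSemiring S]
    (i j : σ) (p : MvPolynomial σ S) :
    pderiv i (pderiv j p) = pderiv j (pderiv i p) := by
  classical
  induction p using MvPolynomial.induction_on' with
  | monomial s a =>
    rcases eq_or_ne i j with rfl | hij
    · rfl
    · simp only [pderiv_monomial]
      rw [Finsupp.tsub_apply, Finsupp.tsub_apply, Finsupp.single_eq_of_ne hij,
        Finsupp.single_eq_of_ne (Ne.symm hij), tsub_zero, tsub_zero,
        tsub_tsub, tsub_tsub, add_comm (Finsupp.single j 1)]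
      ring_nf
  | add p q hp hq => simp [hp, hq]

lemma totalDegree_pderiv_le {σ : Type*} {S : Type*} [CommSemiring S] (i : σ)
    (p : MvPolynomial σ S) :
    (pderiv i p).totalDegree ≤ p.totalDegree - 1 := by
  classical
  conv_lhs => rw [p.as_sum]
  rw [map_sum]
  refine (totalDegree_finset_sum _ _).trans (Finset.sup_le ?_)
  intro s hs
  rw [pderiv_monomial]
  rcases Nat.eq_zero_or_pos (s i) with h0 | h1
  · simp [h0]
  · refine (totalDegree_monomial_le _ _).trans ?_
    have hle : Finsupp.single i 1 ≤ s := by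
      rwa [Finsupp.single_le_iff]
    have hsum : ((s - Finsupp.single i 1).sum fun _ e => e) + 1 = s.sum fun _ e => e := by
      have := tsub_add_cancel_of_le hle
      calc ((s - Finsupp.single i 1).sum fun _ e => e) + 1
          = ((s - Finsupp.single i 1) + Finsupp.single i 1).sum fun _ e => e := by
            rw [Finsupp.sum_add_index' (fun _ => rfl) (fun _ _ _ => rfl), Finsupp.sum_single_index rfl]
        _ = s.sum fun _ e => e := by rw [this]
    have hstot : (s.sum fun _ e => e) ≤ p.totalDegree := le_totalDegree hs
    simp only [Finsupp.sum, id] at hsum hstot ⊢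
    omega

lemma pderiv_eq_zero_of_totalDegree_eq_zero {σ : Type*} {S : Type*} [CommSemiring S] (i : σ)
    {p : MvPolynomial σ S} (h : p.totalDegree = 0) :
    pderiv i p = 0 := by
  classical
  rw [totalDegree_eq_zero_iff] at h
  conv_lhs => rw [p.as_sum]
  rw [map_sum]
  refine Finset.sum_eq_zero fun s hs => ?_
  rw [pderiv_monomial, h s hs i]
  simp

lemma totalDegree_aeval_X_le (i : Fin d) (g : Polynomial R) :
    (Polynomial.aeval (X i : MvPolynomial (Fin d) R) g).totalDegree ≤ g.natDegree := by
  rw [Polynomial.aeval_eq_sum_range]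
  refine (totalDegree_finset_sum _ _).trans (Finset.sup_le ?_)
  intro k hk
  refine (totalDegree_smul_le _ _).trans ?_
  rw [X_pow_eq_monomial]
  refine (totalDegree_monomial_le _ _).trans ?_
  rw [Finsupp.sum_single_index rfl]
  rw [Finset.mem_range] at hk
  simp only [id_eq]
  omega

lemma triangle_sum {β : Type*} [AddCommMonoid β] (N : ℕ) (G : ℕ → ℕ → β)
    (hG : ∀ j m, N ≤ j + m → G j m = 0) :
    ∑ n ∈ Finset.range N, ∑ j ∈ Finset.range (n + 1), G j (n - j)
      = ∑ j ∈ Finset.range N, ∑ m ∈ Finset.range N, G j m := by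
  classical
  rw [← Finset.sum_product']
  rw [Finset.sum_sigma' (Finset.range N) (fun n => Finset.range (n + 1)) (fun n j => G j (n - j))]
  rw [← Finset.sum_subset
    (Finset.filter_subset (fun p : ℕ × ℕ => p.1 + p.2 < N) (Finset.range N ×ˢ Finset.range N))
    (fun x hx hx' => hG x.1 x.2
      (le_of_not_gt fun h => hx' (Finset.mem_filter.mpr ⟨hx, h⟩)))]
  refine Finset.sum_nbij' (fun x => (x.2, x.1 - x.2)) (fun p => ⟨p.1 + p.2, p.1⟩) ?_ ?_ ?_ ?_ ?_
  · rintro ⟨n, j⟩ h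
    simp only [Finset.mem_sigma, Finset.mem_range] at h
    simp only [Finset.mem_filter, Finset.mem_product, Finset.mem_range]
    omega
  · rintro ⟨j, m⟩ h
    simp only [Finset.mem_filter, Finset.mem_product, Finset.mem_range] at h
    simp only [Finset.mem_sigma, Finset.mem_range]
    omega
  · rintro ⟨n, j⟩ h
    simp only [Finset.mem_sigma, Finset.mem_range] at h
    have : j + (n - j) = n := by omega
    simp [this]
  · rintro ⟨j, m⟩ h
    simp
  · rintro ⟨n, j⟩ h
    rfl


variable {d : ℕ}

variable {d : ℕ}

lemma totalDegree_Lop_le (K : Fin d → Fin d → R) (q : MvPolynomial (Fin d) R) :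
    (Lop K q).totalDegree ≤ q.totalDegree - 2 := by
  unfold Lop
  rw [LinearMap.sum_apply]
  refine (totalDegree_finset_sum _ _).trans (Finset.sup_le ?_)
  intro p _
  rw [LinearMap.smul_apply, LinearMap.comp_apply, Derivation.coeFn_coe, Derivation.coeFn_coe]
  refine (totalDegree_smul_le _ _).trans ?_
  refine (totalDegree_pderiv_le _ _).trans ?_
  have := totalDegree_pderiv_le p.2 q
  omega

lemma Lop_eq_zero_of_le_one (K : Fin d → Fin d → R) (q : MvPolynomial (Fin d) R)
    (h : q.totalDegree ≤ 1) : Lop K q = 0 := by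
  unfold Lop
  rw [LinearMap.sum_apply]
  refine Finset.sum_eq_zero fun p _ => ?_
  rw [LinearMap.smul_apply, LinearMap.comp_apply, Derivation.coeFn_coe, Derivation.coeFn_coe]
  have h0 : (pderiv p.2 q).totalDegree = 0 := by
    have := totalDegree_pderiv_le p.2 q
    omega
  rw [pderiv_eq_zero_of_totalDegree_eq_zero p.1 h0, smul_zero]

lemma totalDegree_Lop_pow_le (K : Fin d → Fin d → R) (m : ℕ) (q : MvPolynomial (Fin d) R) :
    ((Lop K ^ m) q).totalDegree ≤ q.totalDegree - 2 * m := by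
  induction m generalizing q with
  | zero => simp
  | succ m ih =>
    rw [pow_succ, Module.End.mul_apply]
    refine (ih _).trans ?_
    have := totalDegree_Lop_le K q
    omega

lemma Lop_pow_eq_zero (K : Fin d → Fin d → R) {m : ℕ} {q : MvPolynomial (Fin d) R}
    (h : q.totalDegree < 2 * m) : (Lop K ^ m) q = 0 := by
  rcases m with _ | m
  · omega
  rw [pow_succ', Module.End.mul_apply]
  have hd : ((Lop K ^ m) q).totalDegree ≤ 1 := by
    have := totalDegree_Lop_pow_le K m q
    omega
  exact Lop_eq_zero_of_le_one K _ hd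


lemma pderiv_aeval_X (i j : Fin d) (g : Polynomial R) :
    pderiv i (Polynomial.aeval (X j : MvPolynomial (Fin d) R) g)
      = if i = j then Polynomial.aeval (X j : MvPolynomial (Fin d) R) (Polynomial.derivative g)
        else 0 := by
  induction g using Polynomial.induction_on with
  | C a => simp [Polynomial.aeval_C, pderiv_C]
  | add p q hp hq =>
    rw [map_add, map_add, hp, hq]
    split <;> simp
  | monomial n a _ =>
    simp only [map_mul, Polynomial.aeval_C, Polynomial.aeval_X_pow, Polynomial.derivative_C_mul,
      Polynomial.derivative_X_pow, MvPolynomial.algebraMap_eq, pderiv_C_mul, pderiv_pow]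
    rcases eq_or_ne i j with rfl | hij
    · rw [pderiv_X_self, if_pos rfl]
      rw [mul_one, MvPolynomial.C_eq_coe_nat]
    · rw [pderiv_X_of_ne (Ne.symm hij), if_neg hij]
      simp

lemma pderiv_prod_aeval (i : Fin d) (q : Fin d → Polynomial R) :
    pderiv i (∏ j, Polynomial.aeval (X j : MvPolynomial (Fin d) R) (q j))
      = ∏ j, Polynomial.aeval (X j : MvPolynomial (Fin d) R)
          (Function.update q i (Polynomial.derivative (q i)) j) := by
  rw [← Finset.mul_prod_erase Finset.univ _ (Finset.mem_univ i),
    ← Finset.mul_prod_erase Finset.univ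
      (fun j => Polynomial.aeval (X j : MvPolynomial (Fin d) R)
        (Function.update q i (Polynomial.derivative (q i)) j)) (Finset.mem_univ i)]
  rw [pderiv_mul]
  have h2 : pderiv i (∏ j ∈ Finset.univ.erase i,
      Polynomial.aeval (X j : MvPolynomial (Fin d) R) (q j)) = 0 := by
    refine Finset.prod_induction _ (fun x => pderiv i x = 0)
      (fun a b ha hb => by
        have ha' : pderiv i a = 0 := ha
        have hb' : pderiv i b = 0 := hb
        show pderiv i (a * b) = 0
        rw [pderiv_mul, ha', hb', mul_zero, zero_mul, add_zero])
      (by show pderiv i (1 : MvPolynomial (Fin d) R) = 0; exact pderiv_one) ?_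
    intro j hj
    rw [pderiv_aeval_X, if_neg (by exact fun h => (Finset.mem_erase.mp hj).1 h.symm)]
  rw [h2, mul_zero, add_zero, pderiv_aeval_X, if_pos rfl, Function.update_self]
  congr 1
  refine Finset.prod_congr rfl fun j hj => ?_
  rw [Function.update_of_ne (Finset.mem_erase.mp hj).1]


variable (R d) in
def pdSet : Set (Module.End R (MvPolynomial (Fin d) R)) :=
  Set.range fun i : Fin d => ((pderiv i).toLinearMap : Module.End R (MvPolynomial (Fin d) R))

lemma pdSet_comm : ∀ a ∈ pdSet R d, ∀ b ∈ pdSet R d, a * b = b * a := by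
  rintro _ ⟨i, rfl⟩ _ ⟨j, rfl⟩
  refine LinearMap.ext fun p => ?_
  rw [Module.End.mul_apply, Module.End.mul_apply]
  exact pderiv_pderiv_comm i j p

instance commA : CommRing (Algebra.adjoin R (pdSet R d)) :=
  Algebra.adjoinCommRingOfComm R pdSet_comm

variable (R) in
def DD (i : Fin d) : Algebra.adjoin R (pdSet R d) :=
  ⟨_, Algebra.subset_adjoin ⟨i, rfl⟩⟩

lemma DD_apply (i : Fin d) (p : MvPolynomial (Fin d) R) :
    ((DD R i : Algebra.adjoin R (pdSet R d)) : Module.End R (MvPolynomial (Fin d) R)) p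
      = pderiv i p := rfl

variable (R) in
def LA (K : Fin d → Fin d → R) : Algebra.adjoin R (pdSet R d) :=
  ∑ p ∈ pairs d, K p.1 p.2 • (DD R p.1 * DD R p.2)

lemma coe_LA (K : Fin d → Fin d → R) :
    ((LA R K : Algebra.adjoin R (pdSet R d)) : Module.End R (MvPolynomial (Fin d) R))
      = Lop K := by
  unfold LA Lop
  rw [AddSubmonoidClass.coe_finset_sum]
  refine Finset.sum_congr rfl fun p _ => ?_
  rw [Subalgebra.coe_smul, MulMemClass.coe_mul]
  rfl

lemma prodD (M : Fin d × Fin d → ℕ) :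
    (∏ i, DD R i ^ rowSum M i) = ∏ p ∈ pairs d, (DD R p.1 * DD R p.2) ^ M p := by
  have h1 : ∀ i : Fin d, (DD R i ^ rowSum M i)
      = (∏ j, if i < j then DD R i ^ M (i, j) else 1)
        * ∏ j, if j < i then DD R i ^ M (j, i) else 1 := by
    intro i
    rw [rowSum, ← Finset.prod_pow_eq_pow_sum, ← Finset.prod_mul_distrib]
    refine Finset.prod_congr rfl fun j _ => ?_
    rcases lt_trichotomy i j with h | rfl | h
    · simp [h, asymm h]
    · simp [lt_irrefl]
    · simp [h, asymm h]
  rw [Finset.prod_congr rfl fun i _ => h1 i, Finset.prod_mul_distrib]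
  have h2 : (∏ i, ∏ j, if i < j then DD R i ^ M (i, j) else 1)
      = ∏ p ∈ pairs d, DD R p.1 ^ M p := by
    rw [← Finset.prod_product', ← Finset.prod_filter, Finset.univ_product_univ]
    rfl
  have h3 : (∏ i, ∏ j, if j < i then DD R i ^ M (j, i) else 1)
      = ∏ p ∈ pairs d, DD R p.2 ^ M p := by
    rw [← Finset.prod_product', ← Finset.prod_filter, Finset.univ_product_univ]
    refine Finset.prod_nbij' Prod.swap Prod.swap ?_ ?_ ?_ ?_ ?_
    · rintro ⟨i, j⟩ h
      simp only [Finset.mem_filter, Finset.mem_univ, true_and] at h ⊢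
      simp only [pairs, Finset.mem_filter, Finset.mem_univ, true_and]
      exact h
    · rintro ⟨i, j⟩ h
      simp only [pairs, Finset.mem_filter, Finset.mem_univ, true_and] at h
      simp only [Finset.mem_filter, Finset.mem_univ, true_and]
      exact h
    · rintro p _; rfl
    · rintro p _; rfl
    · rintro ⟨i, j⟩ _; rfl
  rw [h2, h3, ← Finset.prod_mul_distrib]
  exact Finset.prod_congr rfl fun p _ => (mul_pow _ _ _).symm

lemma sum_rowSum (M : Fin d × Fin d → ℕ) :
    ∑ i, rowSum M i = 2 * ∑ p ∈ pairs d, M p := by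
  have h1 : ∀ i : Fin d, rowSum M i
      = (∑ j, if i < j then M (i, j) else 0) + ∑ j, if j < i then M (j, i) else 0 := by
    intro i
    rw [rowSum, ← Finset.sum_add_distrib]
    refine Finset.sum_congr rfl fun j _ => ?_
    rcases lt_trichotomy i j with h | rfl | h
    · simp [h, asymm h]
    · simp [lt_irrefl]
    · simp [h, asymm h]
  rw [Finset.sum_congr rfl fun i _ => h1 i, Finset.sum_add_distrib]
  have h2 : (∑ i : Fin d, ∑ j, if i < j then M (i, j) else 0)
      = ∑ p ∈ pairs d, M p := by
    rw [← Finset.sum_product', ← Finset.sum_filter, Finset.univ_product_univ]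
    rfl
  have h3 : (∑ i : Fin d, ∑ j, if j < i then M (j, i) else 0)
      = ∑ p ∈ pairs d, M p := by
    rw [← Finset.sum_product', ← Finset.sum_filter, Finset.univ_product_univ]
    refine Finset.sum_nbij' Prod.swap Prod.swap ?_ ?_ ?_ ?_ ?_
    · rintro ⟨i, j⟩ h
      simp only [Finset.mem_filter, Finset.mem_univ, true_and] at h
      simp only [pairs, Finset.mem_filter, Finset.mem_univ, true_and]
      exact h
    · rintro ⟨i, j⟩ h
      simp only [pairs, Finset.mem_filter, Finset.mem_univ, true_and] at h
      simp only [Finset.mem_filter, Finset.mem_univ, true_and]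
      exact h
    · rintro p _; rfl
    · rintro p _; rfl
    · rintro ⟨i, j⟩ _; rfl
  rw [h2, h3]
  omega

lemma apply_prodD (g : Fin d → ℕ) (h : Fin d → Polynomial R) :
    ((∏ i, DD R i ^ g i : Algebra.adjoin R (pdSet R d)) :
        Module.End R (MvPolynomial (Fin d) R)) (∏ j, Polynomial.aeval (X j) (h j))
      = ∏ j, Polynomial.aeval (X j) (Polynomial.derivative^[g j] (h j)) := by
  suffices H : ∀ (n : ℕ) (g : Fin d → ℕ), (∑ i, g i) = n →
      ∀ h : Fin d → Polynomial R,
      ((∏ i, DD R i ^ g i : Algebra.adjoin R (pdSet R d)) :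
        Module.End R (MvPolynomial (Fin d) R)) (∏ j, Polynomial.aeval (X j) (h j))
      = ∏ j, Polynomial.aeval (X j) (Polynomial.derivative^[g j] (h j)) from H _ g rfl h
  intro n
  induction n with
  | zero =>
    intro g hg h
    have hz : ∀ i, g i = 0 := by
      intro i
      have := Finset.sum_eq_zero_iff.mp hg
      exact this i (Finset.mem_univ i)
    have h1 : (∏ i, DD R i ^ g i : Algebra.adjoin R (pdSet R d)) = 1 :=
      Finset.prod_eq_one fun i _ => by rw [hz i, pow_zero]
    rw [h1, OneMemClass.coe_one, Module.End.one_apply]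
    exact (Finset.prod_congr rfl fun j _ => by rw [hz j]; rfl).symm
  | succ n ih =>
    intro g hg h
    obtain ⟨i0, -, hi0⟩ : ∃ i ∈ Finset.univ, g i ≠ 0 :=
      Finset.exists_ne_zero_of_sum_ne_zero (by omega)
    set g' : Fin d → ℕ := Function.update g i0 (g i0 - 1) with hg'
    have hsum' : (∑ i, g' i) = n := by
      rw [Finset.sum_update_of_mem (Finset.mem_univ i0)]
      have h5 := Finset.add_sum_erase Finset.univ g (Finset.mem_univ i0)
      rw [Finset.erase_eq] at h5
      omega
    have hsplit : (∏ i, DD R i ^ g i : Algebra.adjoin R (pdSet R d))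
        = DD R i0 * ∏ i, DD R i ^ g' i := by
      rw [← Finset.mul_prod_erase Finset.univ _ (Finset.mem_univ i0),
        ← Finset.mul_prod_erase Finset.univ (fun i => DD R i ^ g' i) (Finset.mem_univ i0)]
      have h1 : g i0 = g' i0 + 1 := by
        simp only [hg', Function.update_self]
        omega
      have h2 : (∏ i ∈ Finset.univ.erase i0, DD R i ^ g i)
          = ∏ i ∈ Finset.univ.erase i0, DD R i ^ g' i :=
        Finset.prod_congr rfl fun i hi => by
          rw [hg', Function.update_of_ne (Finset.mem_erase.mp hi).1]
      rw [h1, h2, pow_succ']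
      ring
    rw [hsplit, MulMemClass.coe_mul, Module.End.mul_apply, ih g' hsum' h]
    rw [DD_apply, pderiv_prod_aeval]
    refine Finset.prod_congr rfl fun j _ => ?_
    rcases eq_or_ne j i0 with rfl | hj
    · rw [Function.update_self, hg', Function.update_self,
        ← Function.iterate_succ_apply' Polynomial.derivative]
      have h6 : (g j - 1).succ = g j := by omega
      rw [h6]
    · rw [Function.update_of_ne hj, hg', Function.update_of_ne hj]



lemma LA_split (K K' : Fin d → Fin d → R) :
    LA R K = LA R (fun i j => K i j - K' i j) + LA R K' := by
  unfold LA
  rw [← Finset.sum_add_distrib]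
  refine Finset.sum_congr rfl fun p _ => ?_
  rw [← add_smul, sub_add_cancel]

lemma LA_pow_expand (c : Fin d × Fin d → R) (k : ℕ) :
    (∑ p ∈ pairs d, c p • (DD R p.1 * DD R p.2)) ^ k
      = ∑ M ∈ Finset.piAntidiag (pairs d) k,
          Nat.multinomial (pairs d) M •
            ((∏ p ∈ pairs d, c p ^ M p) • ∏ i, DD R i ^ rowSum M i) := by
  classical
  rw [Finset.sum_pow_eq_sum_piAntidiag]
  refine Finset.sum_congr rfl fun M hM => ?_
  rw [prodD, nsmul_eq_mul]
  congr 1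
  calc ∏ p ∈ pairs d, (c p • (DD R p.1 * DD R p.2)) ^ M p
      = ∏ p ∈ pairs d, (algebraMap R (Algebra.adjoin R (pdSet R d)) (c p ^ M p)
          * (DD R p.1 * DD R p.2) ^ M p) := by
        refine Finset.prod_congr rfl fun p _ => ?_
        rw [smul_pow, Algebra.smul_def, map_pow]
    _ = algebraMap R (Algebra.adjoin R (pdSet R d)) (∏ p ∈ pairs d, c p ^ M p)
          * ∏ p ∈ pairs d, (DD R p.1 * DD R p.2) ^ M p := by
        rw [Finset.prod_mul_distrib, map_prod]
    _ = (∏ p ∈ pairs d, c p ^ M p) • ∏ p ∈ pairs d, (DD R p.1 * DD R p.2) ^ M p := by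
        rw [Algebra.smul_def]

lemma core (c : Fin d × Fin d → R) (K' : Fin d → Fin d → R) (f : Fin d → Polynomial R)
    (j m : ℕ) :
    (((∑ p ∈ pairs d, c p • (DD R p.1 * DD R p.2)) ^ j * LA R K' ^ m :
        Algebra.adjoin R (pdSet R d)) : Module.End R (MvPolynomial (Fin d) R))
        (∏ i, Polynomial.aeval (X i) (f i))
      = ∑ M ∈ Finset.piAntidiag (pairs d) j,
          Nat.multinomial (pairs d) M •
            ((Lop K' ^ m) (∏ i, Polynomial.aeval (X i)
                (Polynomial.derivative^[rowSum M i] (f i)))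
              * ∏ p ∈ pairs d, C (c p) ^ M p) := by
  classical
  have hA : (∑ p ∈ pairs d, c p • (DD R p.1 * DD R p.2)) ^ j * LA R K' ^ m
      = ∑ M ∈ Finset.piAntidiag (pairs d) j,
          Nat.multinomial (pairs d) M •
            ((∏ p ∈ pairs d, c p ^ M p) • (LA R K' ^ m * ∏ i, DD R i ^ rowSum M i)) := by
    rw [LA_pow_expand, Finset.sum_mul]
    refine Finset.sum_congr rfl fun M hM => ?_
    rw [smul_mul_assoc, smul_mul_assoc, mul_comm (∏ i, DD R i ^ rowSum M i) (LA R K' ^ m)]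
  rw [hA, AddSubmonoidClass.coe_finset_sum, LinearMap.sum_apply]
  refine Finset.sum_congr rfl fun M hM => ?_
  rw [← Nat.cast_smul_eq_nsmul ℕ]
  rw [Subalgebra.coe_smul, Subalgebra.coe_smul, MulMemClass.coe_mul, SubmonoidClass.coe_pow,
    coe_LA, LinearMap.smul_apply, LinearMap.smul_apply, Module.End.mul_apply, apply_prodD,
    Nat.cast_smul_eq_nsmul]
  congr 1
  rw [smul_eq_C_mul, map_prod]
  rw [mul_comm]
  congr 1
  exact Finset.prod_congr rfl fun p _ => (map_pow _ _ _)

lemma Lop_pow_prod_eq_zero (K : Fin d → Fin d → R) (h : Fin d → Polynomial R) {n : ℕ}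
    (hn : ∑ i, (h i).natDegree < n) :
    (Lop K ^ n) (∏ i, Polynomial.aeval (X i) (h i)) = 0 := by
  refine Lop_pow_eq_zero K ?_
  have h1 : (∏ i, Polynomial.aeval (X i : MvPolynomial (Fin d) R) (h i)).totalDegree
      ≤ ∑ i, (h i).natDegree :=
    (totalDegree_finset_prod _ _).trans
      (Finset.sum_le_sum fun i _ => totalDegree_aeval_X_le i (h i))
  omega

lemma multiStar_eq_sum (ℏ : R) (K : Fin d → Fin d → R) (h : Fin d → Polynomial R) {N : ℕ}
    (hN : ∑ i, (h i).natDegree < N) :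
    multiStar ℏ K h = ∑ n ∈ Finset.range N, (n.factorial : ℚ)⁻¹ •
      (ℏ ^ n • ((Lop K ^ n) (∏ i, Polynomial.aeval (X i) (h i)))) := by
  refine finsum_eq_sum_of_support_subset _ ?_
  intro n hn
  simp only [Function.mem_support] at hn
  simp only [Finset.coe_range, Set.mem_Iio]
  by_contra hlt
  push_neg at hlt
  exact hn (by rw [Lop_pow_prod_eq_zero K h (by omega), smul_zero, smul_zero])

lemma multiStar_eq_zero (ℏ : R) (K : Fin d → Fin d → R) (h : Fin d → Polynomial R)
    (i0 : Fin d) (h0 : h i0 = 0) : multiStar ℏ K h = 0 := by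
  unfold multiStar
  have hP : (∏ i, Polynomial.aeval (X i : MvPolynomial (Fin d) R) (h i)) = 0 :=
    Finset.prod_eq_zero (Finset.mem_univ i0) (by rw [h0, map_zero])
  simp only [hP, map_zero, smul_zero]
  exact finsum_zero

lemma mixed_zero (Ka Kb : Fin d → Fin d → R) (p : MvPolynomial (Fin d) R) (j m : ℕ)
    (h : p.totalDegree < j + m) : (Lop Ka ^ j) ((Lop Kb ^ m) p) = 0 := by
  by_cases h2 : p.totalDegree < 2 * m
  · rw [Lop_pow_eq_zero Kb h2, map_zero]
  · refine Lop_pow_eq_zero Ka ?_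
    have := totalDegree_Lop_pow_le Kb m p
    omega

lemma inv_fact_smul {n j : ℕ} (hj : j ≤ n) (z : MvPolynomial (Fin d) R) :
    (n.factorial : ℚ)⁻¹ • ((n.choose j) • z)
      = ((j.factorial : ℚ)⁻¹ * ((n - j).factorial : ℚ)⁻¹) • z := by
  rw [← Nat.cast_smul_eq_nsmul ℚ, smul_smul]
  congr 1
  rw [Nat.cast_choose ℚ hj]
  have h1 : (n.factorial : ℚ) ≠ 0 := Nat.cast_ne_zero.mpr n.factorial_ne_zero
  have h2 : (j.factorial : ℚ) ≠ 0 := Nat.cast_ne_zero.mpr j.factorial_ne_zero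
  have h3 : ((n - j).factorial : ℚ) ≠ 0 := Nat.cast_ne_zero.mpr (n - j).factorial_ne_zero
  field_simp

lemma scalar_shuffle (a b : ℚ) (r s : R) (n : ℕ) (z : MvPolynomial (Fin d) R) :
    a • (r • (n • (b • (s • z)))) = (a * b) • ((r * s) • (n • z)) := by
  rw [← Nat.cast_smul_eq_nsmul ℚ n z, ← Nat.cast_smul_eq_nsmul ℚ n]
  rw [smul_smul (n : ℚ) b, smul_comm r ((n : ℚ) * b), smul_smul a ((n : ℚ) * b),
    smul_smul r s, smul_comm (r * s) (n : ℚ), smul_smul (a * b) (n : ℚ),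
    show a * ((n : ℚ) * b) = a * b * (n : ℚ) by ring]

end WickAux

open WickAux

/-- the generalized Wick theorem relating `⋆_K` and `⋆_{K′}`. -/
theorem generalized_wick {d : ℕ} (ℏ : R) (K K' : Fin d → Fin d → R)
    (f : Fin d → Polynomial R) :
    multiStar ℏ K f =
      finsum fun k : ℕ =>
        (k.factorial : ℚ)⁻¹ •
          (ℏ ^ k •
            ∑ M ∈ Finset.piAntidiag (pairs d) k,
              Nat.multinomial (pairs d) M •
                (multiStar ℏ K' (fun i => Polynomial.derivative^[rowSum M i] (f i)) *
                  ∏ p ∈ pairs d, C (K p.1 p.2 - K' p.1 p.2) ^ M p)) := by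
  classical
  set N : ℕ := (∑ i, (f i).natDegree) + 1 with hN
  have hdegf : ∑ i, (f i).natDegree < N := by omega
  set Kd : Fin d → Fin d → R := fun i j => K i j - K' i j with hKd
  set P₀ : MvPolynomial (Fin d) R := ∏ i, Polynomial.aeval (X i) (f i) with hP₀
  set G : ℕ → ℕ → MvPolynomial (Fin d) R := fun j m =>
    ((j.factorial : ℚ)⁻¹ * (m.factorial : ℚ)⁻¹) •
      (ℏ ^ (j + m) • ((Lop Kd ^ j) ((Lop K' ^ m) P₀))) with hG
  have hP₀deg : P₀.totalDegree ≤ ∑ i, (f i).natDegree :=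
    (totalDegree_finset_prod _ _).trans
      (Finset.sum_le_sum fun i _ => totalDegree_aeval_X_le i (f i))
  have hGzero : ∀ j m : ℕ, N ≤ j + m → G j m = 0 := by
    intro j m hjm
    have hz : (Lop Kd ^ j) ((Lop K' ^ m) P₀) = 0 := mixed_zero _ _ _ _ _ (by omega)
    simp only [hG, hz, smul_zero]
  have step1 : multiStar ℏ K f = ∑ j ∈ Finset.range N, ∑ m ∈ Finset.range N, G j m := by
    rw [multiStar_eq_sum ℏ K f hdegf, ← triangle_sum N G hGzero]
    refine Finset.sum_congr rfl fun n hn => ?_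
    have e1 : (Lop K ^ n) P₀ = ∑ jj ∈ Finset.range (n + 1),
        (n.choose jj) • ((Lop Kd ^ jj) ((Lop K' ^ (n - jj)) P₀)) := by
      have e0 : Lop K = ((LA R Kd + LA R K' : Algebra.adjoin R (pdSet R d)) :
          Module.End R (MvPolynomial (Fin d) R)) := by
        rw [← LA_split K K', coe_LA]
      rw [e0, ← SubmonoidClass.coe_pow, add_pow]
      rw [AddSubmonoidClass.coe_finset_sum, LinearMap.sum_apply]
      refine Finset.sum_congr rfl fun jj hj => ?_
      have e2 : (LA R Kd ^ jj * LA R K' ^ (n - jj) *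
            ((n.choose jj : ℕ) : Algebra.adjoin R (pdSet R d)))
          = (n.choose jj) • (LA R Kd ^ jj * LA R K' ^ (n - jj)) := by
        rw [nsmul_eq_mul, mul_comm]
      rw [e2, ← Nat.cast_smul_eq_nsmul ℕ, Subalgebra.coe_smul, LinearMap.smul_apply,
        MulMemClass.coe_mul, SubmonoidClass.coe_pow, SubmonoidClass.coe_pow, coe_LA, coe_LA,
        Module.End.mul_apply, Nat.cast_smul_eq_nsmul]
    rw [e1, Finset.smul_sum, Finset.smul_sum]
    refine Finset.sum_congr rfl fun jj hj => ?_
    rw [Finset.mem_range] at hj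
    have hjle : jj ≤ n := by omega
    rw [smul_comm (ℏ ^ n), inv_fact_smul hjle]
    simp only [hG]
    have hsum : jj + (n - jj) = n := by omega
    rw [hsum]
  have hcore : ∀ j m : ℕ, (Lop Kd ^ j) ((Lop K' ^ m) P₀)
      = ∑ M ∈ Finset.piAntidiag (pairs d) j,
          Nat.multinomial (pairs d) M •
            ((Lop K' ^ m) (∏ i, Polynomial.aeval (X i)
                (Polynomial.derivative^[rowSum M i] (f i)))
              * ∏ p ∈ pairs d, C (K p.1 p.2 - K' p.1 p.2) ^ M p) := by
    intro j m
    have h1 : (Lop Kd ^ j) ((Lop K' ^ m) P₀)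
        = (((∑ p ∈ pairs d, (fun q : Fin d × Fin d => K q.1 q.2 - K' q.1 q.2) p •
            (DD R p.1 * DD R p.2)) ^ j * LA R K' ^ m : Algebra.adjoin R (pdSet R d)) :
            Module.End R (MvPolynomial (Fin d) R)) P₀ := by
      rw [MulMemClass.coe_mul, Module.End.mul_apply, SubmonoidClass.coe_pow,
        SubmonoidClass.coe_pow]
      rw [show (∑ p ∈ pairs d, (fun q : Fin d × Fin d => K q.1 q.2 - K' q.1 q.2) p •
            (DD R p.1 * DD R p.2)) = LA R Kd from rfl, coe_LA, coe_LA]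
    rw [h1, hP₀, core]
  have hdeg2 : ∀ M : Fin d × Fin d → ℕ,
      ∑ i, (Polynomial.derivative^[rowSum M i] (f i)).natDegree < N := by
    intro M
    refine lt_of_le_of_lt (Finset.sum_le_sum fun i _ => ?_) hdegf
    exact (Polynomial.natDegree_iterate_derivative _ _).trans tsub_le_self
  have step2 : ∀ j : ℕ,
      (∑ m ∈ Finset.range N, G j m)
        = (j.factorial : ℚ)⁻¹ •
            (ℏ ^ j • ∑ M ∈ Finset.piAntidiag (pairs d) j,
              Nat.multinomial (pairs d) M •
                (multiStar ℏ K' (fun i => Polynomial.derivative^[rowSum M i] (f i)) *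
                  ∏ p ∈ pairs d, C (K p.1 p.2 - K' p.1 p.2) ^ M p)) := by
    intro j
    have hms : ∀ M : Fin d × Fin d → ℕ,
        multiStar ℏ K' (fun i => Polynomial.derivative^[rowSum M i] (f i)) *
            ∏ p ∈ pairs d, C (K p.1 p.2 - K' p.1 p.2) ^ M p
          = ∑ m ∈ Finset.range N, (m.factorial : ℚ)⁻¹ •
              (ℏ ^ m • ((Lop K' ^ m) (∏ i, Polynomial.aeval (X i)
                  (Polynomial.derivative^[rowSum M i] (f i)))
                * ∏ p ∈ pairs d, C (K p.1 p.2 - K' p.1 p.2) ^ M p)) := by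
      intro M
      rw [multiStar_eq_sum ℏ K' _ (hdeg2 M), Finset.sum_mul]
      exact Finset.sum_congr rfl fun m _ => by rw [smul_mul_assoc, smul_mul_assoc]
    calc (∑ m ∈ Finset.range N, G j m)
        = ∑ m ∈ Finset.range N, ∑ M ∈ Finset.piAntidiag (pairs d) j,
            ((j.factorial : ℚ)⁻¹ * (m.factorial : ℚ)⁻¹) •
              (ℏ ^ (j + m) • (Nat.multinomial (pairs d) M •
                ((Lop K' ^ m) (∏ i, Polynomial.aeval (X i)
                    (Polynomial.derivative^[rowSum M i] (f i)))
                  * ∏ p ∈ pairs d, C (K p.1 p.2 - K' p.1 p.2) ^ M p))) := by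
          refine Finset.sum_congr rfl fun m _ => ?_
          simp only [hG]
          rw [hcore j m, Finset.smul_sum, Finset.smul_sum]
      _ = ∑ m ∈ Finset.range N, ∑ M ∈ Finset.piAntidiag (pairs d) j,
            (j.factorial : ℚ)⁻¹ •
              (ℏ ^ j • (Nat.multinomial (pairs d) M •
                ((m.factorial : ℚ)⁻¹ •
                  (ℏ ^ m • ((Lop K' ^ m) (∏ i, Polynomial.aeval (X i)
                      (Polynomial.derivative^[rowSum M i] (f i)))
                    * ∏ p ∈ pairs d, C (K p.1 p.2 - K' p.1 p.2) ^ M p))))) := by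
          refine Finset.sum_congr rfl fun m _ => Finset.sum_congr rfl fun M _ => ?_
          rw [scalar_shuffle, pow_add]
      _ = ∑ M ∈ Finset.piAntidiag (pairs d) j, ∑ m ∈ Finset.range N,
            (j.factorial : ℚ)⁻¹ •
              (ℏ ^ j • (Nat.multinomial (pairs d) M •
                ((m.factorial : ℚ)⁻¹ •
                  (ℏ ^ m • ((Lop K' ^ m) (∏ i, Polynomial.aeval (X i)
                      (Polynomial.derivative^[rowSum M i] (f i)))
                    * ∏ p ∈ pairs d, C (K p.1 p.2 - K' p.1 p.2) ^ M p))))) :=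
          Finset.sum_comm
      _ = ∑ M ∈ Finset.piAntidiag (pairs d) j,
            (j.factorial : ℚ)⁻¹ •
              (ℏ ^ j • (Nat.multinomial (pairs d) M •
                (multiStar ℏ K' (fun i => Polynomial.derivative^[rowSum M i] (f i)) *
                  ∏ p ∈ pairs d, C (K p.1 p.2 - K' p.1 p.2) ^ M p))) := by
          refine Finset.sum_congr rfl fun M _ => ?_
          rw [hms M, Finset.smul_sum, Finset.smul_sum, Finset.smul_sum]
      _ = (j.factorial : ℚ)⁻¹ •
            (ℏ ^ j • ∑ M ∈ Finset.piAntidiag (pairs d) j,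
              Nat.multinomial (pairs d) M •
                (multiStar ℏ K' (fun i => Polynomial.derivative^[rowSum M i] (f i)) *
                  ∏ p ∈ pairs d, C (K p.1 p.2 - K' p.1 p.2) ^ M p)) := by
          rw [Finset.smul_sum, Finset.smul_sum]
  rw [step1, Finset.sum_congr rfl fun j _ => step2 j]
  have hRzero : ∀ k : ℕ, N ≤ k →
      ((k.factorial : ℚ)⁻¹ •
        (ℏ ^ k • ∑ M ∈ Finset.piAntidiag (pairs d) k,
          Nat.multinomial (pairs d) M •
            (multiStar ℏ K' (fun i => Polynomial.derivative^[rowSum M i] (f i)) *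
              ∏ p ∈ pairs d, C (K p.1 p.2 - K' p.1 p.2) ^ M p))) = 0 := by
    intro k hk
    have hz : ∀ M ∈ Finset.piAntidiag (pairs d) k,
        Nat.multinomial (pairs d) M •
          (multiStar ℏ K' (fun i => Polynomial.derivative^[rowSum M i] (f i)) *
            ∏ p ∈ pairs d, C (K p.1 p.2 - K' p.1 p.2) ^ M p) = 0 := by
      intro M hM
      obtain ⟨i0, hi0⟩ : ∃ i, (f i).natDegree < rowSum M i := by
        by_contra hc
        push_neg at hc
        have h1 : ∑ i, rowSum M i = 2 * k := by
          rw [sum_rowSum M, (Finset.mem_piAntidiag.mp hM).1]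
        have h2 : ∑ i, rowSum M i ≤ ∑ i, (f i).natDegree :=
          Finset.sum_le_sum fun i _ => hc i
        omega
      rw [multiStar_eq_zero ℏ K' _ i0 (Polynomial.iterate_derivative_eq_zero hi0),
        zero_mul, smul_zero]
    rw [Finset.sum_eq_zero hz, smul_zero, smul_zero]
  refine (finsum_eq_sum_of_support_subset _ fun k hk => ?_).symm
  simp only [Function.mem_support] at hk
  simp only [Finset.coe_range, Set.mem_Iio]
  by_contra hlt
  push_neg at hlt
  exact hk (hRzero k hlt)


end
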